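/- Let ψ be a unital linear functional on ℂ⟨x₁, x₂, …⟩. If P ∈ ℂ⟨x₁, x₂, …⟩ satisfies (id ⊗ ψ)(∂ᵢ P) = 0 for every i ≥ 1, then P is a scalar multiple of 1. Equivalently, the kernel of the linear map P ↦ ((id ⊗ ψ)(∂₁P), (id ⊗ ψ)(∂₂P), …) consists exactly of the constants. -/

import Mathlib

open TensorProduct

/-- The product `x_{u(1)} ⋯ x_{u(n)}` of generators of the free algebra along a word. -/
noncomputable def wordProd (l : List ℕ) : FreeAlgebra ℂ ℕ :=
  (l.map (FreeAlgebra.ι ℂ)).prod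

/-- The partial difference quotient `∂ᵢ`, the ℂ-linear map determined on the basis of
words by `∂ᵢ(x_{u(1)}⋯x_{u(n)}) = Σ_{j : u(j) = i} x_{u(1)}⋯x_{u(j−1)} ⊗ x_{u(j+1)}⋯x_{u(n)}`
(here `i` indexes the generator `FreeAlgebra.ι ℂ i`). -/
noncomputable def dq (i : ℕ) :
    FreeAlgebra ℂ ℕ →ₗ[ℂ] FreeAlgebra ℂ ℕ ⊗[ℂ] FreeAlgebra ℂ ℕ :=
  (FreeAlgebra.basisFreeMonoid ℂ ℕ).constr ℂ fun w =>
    ∑ j ∈ Finset.range (FreeMonoid.toList w).length,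
      if (FreeMonoid.toList w).getD j 0 = i then
        wordProd ((FreeMonoid.toList w).take j) ⊗ₜ[ℂ]
          wordProd ((FreeMonoid.toList w).drop (j + 1))
      else 0

/-- The map `(id ⊗ ψ) : a ⊗ b ↦ ψ(b)·a`. -/
noncomputable def idTensor (ψ : FreeAlgebra ℂ ℕ →ₗ[ℂ] ℂ) :
    FreeAlgebra ℂ ℕ ⊗[ℂ] FreeAlgebra ℂ ℕ →ₗ[ℂ] FreeAlgebra ℂ ℕ :=
  TensorProduct.lift
    { toFun := fun a => ψ.smulRight a
      map_add' := by intro a b; ext c; simp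
      map_smul' := by
        intro c a
        ext b
        simp only [LinearMap.smulRight_apply, LinearMap.smul_apply, RingHom.id_apply]
        rw [smul_comm] }

/-- The map `(ψ ⊗ id) : a ⊗ b ↦ ψ(a)·b`. -/
noncomputable def tensorId (ψ : FreeAlgebra ℂ ℕ →ₗ[ℂ] ℂ) :
    FreeAlgebra ℂ ℕ ⊗[ℂ] FreeAlgebra ℂ ℕ →ₗ[ℂ] FreeAlgebra ℂ ℕ :=
  TensorProduct.lift
    { toFun := fun a => ψ a • (LinearMap.id : FreeAlgebra ℂ ℕ →ₗ[ℂ] FreeAlgebra ℂ ℕ)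
      map_add' := by intro a b; simp [add_smul]
      map_smul' := by intro c a; simp [smul_smul] }

open scoped Classical

lemma basis_eq_wordProd (w : FreeMonoid ℕ) :
    FreeAlgebra.basisFreeMonoid ℂ ℕ w = wordProd (FreeMonoid.toList w) := by
  rw [FreeAlgebra.basisFreeMonoid]
  simp only [Module.Basis.map_apply, Finsupp.coe_basisSingleOne]
  have : (MonoidAlgebra.coeffLinearEquiv ℂ).symm (Finsupp.single w 1 : FreeMonoid ℕ →₀ ℂ) =
      MonoidAlgebra.of ℂ (FreeMonoid ℕ) w := rfl
  simp only [LinearEquiv.symm_trans_apply, this]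
  show (FreeAlgebra.equivMonoidAlgebraFreeMonoid (R := ℂ) (X := ℕ)).symm _ = _
  rw [FreeAlgebra.equivMonoidAlgebraFreeMonoid]
  simp [AlgEquiv.ofAlgHom, FreeMonoid.lift_apply, wordProd]

lemma idTensor_tmul (ψ : FreeAlgebra ℂ ℕ →ₗ[ℂ] ℂ) (a b : FreeAlgebra ℂ ℕ) :
    idTensor ψ (a ⊗ₜ[ℂ] b) = ψ b • a := rfl

lemma coord_wordProd (v : FreeMonoid ℕ) (l : List ℕ) :
    (FreeAlgebra.basisFreeMonoid ℂ ℕ).coord v (wordProd l)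
      = if FreeMonoid.ofList l = v then 1 else 0 := by
  have : wordProd l = FreeAlgebra.basisFreeMonoid ℂ ℕ (FreeMonoid.ofList l) := by
    rw [basis_eq_wordProd, FreeMonoid.toList_ofList]
  rw [this]
  simp [Module.Basis.coord_apply, Module.Basis.repr_self, Finsupp.single_apply]

lemma eq_take_concat (l : List ℕ) (h : l ≠ []) :
    l = l.take (l.length - 1) ++ [l.getD (l.length - 1) 0] := by
  have h1 : l.length - 1 < l.length := by
    have := List.length_pos_iff.mpr h; omega
  conv_lhs => rw [← List.take_append_drop (l.length - 1) l]
  congr 1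
  rw [List.drop_eq_getElem_cons h1, List.getD_eq_getElem l 0 h1]
  have : l.length - 1 + 1 = l.length := by omega
  rw [this, List.drop_length]

lemma key (ψ : FreeAlgebra ℂ ℕ →ₗ[ℂ] ℂ) (hψ1 : ψ 1 = 1)
    (w w' : FreeMonoid ℕ) (hw : FreeMonoid.toList w ≠ [])
    (hlen : (FreeMonoid.toList w').length ≤ (FreeMonoid.toList w).length) :
    (FreeAlgebra.basisFreeMonoid ℂ ℕ).coord
        (FreeMonoid.ofList ((FreeMonoid.toList w).take ((FreeMonoid.toList w).length - 1)))
        (idTensor ψ (dq ((FreeMonoid.toList w).getD ((FreeMonoid.toList w).length - 1) 0)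
          (FreeAlgebra.basisFreeMonoid ℂ ℕ w')))
      = if w' = w then 1 else 0 := by
  set l := FreeMonoid.toList w with hl
  set l' := FreeMonoid.toList w' with hl'
  set n := l.length with hn
  set i := l.getD (n-1) 0 with hi
  have hn1 : 1 ≤ n := List.length_pos_iff.mpr hw
  rw [dq, Module.Basis.constr_basis, map_sum, map_sum]
  simp only [← hl']
  -- each term
  have hterm : ∀ j ∈ Finset.range l'.length,
      (FreeAlgebra.basisFreeMonoid ℂ ℕ).coord (FreeMonoid.ofList (l.take (n-1)))
        (idTensor ψ (if l'.getD j 0 = i then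
          wordProd (l'.take j) ⊗ₜ[ℂ] wordProd (l'.drop (j+1)) else 0))
      = if l'.getD j 0 = i then
          (ψ (wordProd (l'.drop (j+1)))) *
            (if FreeMonoid.ofList (l'.take j) = FreeMonoid.ofList (l.take (n-1)) then 1 else 0)
        else 0 := by
    intro j _
    split
    · rw [idTensor_tmul, map_smul, coord_wordProd]; simp [smul_eq_mul]
    · simp
  rw [Finset.sum_congr rfl hterm]
  by_cases hww : w' = w
  · subst hww
    simp only [if_pos rfl]
    have hll : l' = l := by rw [hl', hl]
    rw [Finset.sum_eq_single (n-1)]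
    · have h1 : n - 1 < l'.length := by rw [hll]; omega
      rw [if_pos (by rw [hll])]
      have hdrop : l'.drop (n-1+1) = [] := by
        rw [hll]; have : n - 1 + 1 = n := by omega
        rw [this, List.drop_length]
      rw [hdrop]
      have : wordProd [] = 1 := by simp [wordProd]
      rw [this, hψ1, if_pos (by rw [hll]), one_mul]
      simp
    · intro j hj hjne
      rw [Finset.mem_range] at hj
      split
      · rw [if_neg, mul_zero]
        intro hcontra
        have := congrArg (fun x => (FreeMonoid.toList x).length) hcontra
        simp only [FreeMonoid.toList_ofList, List.length_take] at this
        have hL : l'.length = l.length := by rw [hll]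
        omega
      · rfl
    · intro hnot
      exfalso
      exact hnot (Finset.mem_range.mpr (by rw [hll]; omega))
  · rw [if_neg hww]
    apply Finset.sum_eq_zero
    intro j hj
    rw [Finset.mem_range] at hj
    split
    · rename_i hget
      rw [if_neg, mul_zero]
      intro hcontra
      apply hww
      have hcl : l'.take j = l.take (n-1) := by
        have := congrArg FreeMonoid.toList hcontra
        simpa using this
      have hjlen : j = n - 1 := by
        have := congrArg List.length hcl
        simp only [List.length_take] at this
        omega
      have hlen' : l'.length = n := by omega
      -- l' = take (n-1) l' ++ [i] = take (n-1) l ++ [getD (n-1) l] = l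
      have h1 : l' = l'.take (l'.length - 1) ++ [l'.getD (l'.length - 1) 0] := by
        apply eq_take_concat; intro h0; rw [h0] at hlen'; simp at hlen'; omega
      have h2 : l = l.take (n - 1) ++ [i] := by
        rw [hi, hn]; exact eq_take_concat l hw
      have heq : l' = l := by
        rw [h1, hlen']
        have e1 : List.take (n - 1) l' = List.take (n - 1) l := by rw [hjlen] at hcl; exact hcl
        have e2 : l'.getD (n - 1) 0 = i := by rw [hjlen] at hget; exact hget
        rw [e1, e2, ← h2]
      rw [hl', hl] at heq
      exact FreeMonoid.toList.injective heq
    · rfl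


/-- if `(id ⊗ ψ)(∂ᵢ P) = 0` for every generator index `i`, then `P` is a
scalar multiple of `1`; i.e. the kernel of `P ↦ ((id ⊗ ψ)(∂ᵢ P))ᵢ` consists exactly of
the constants. -/
theorem kernel_of_difference_quotients_is_constants
    (ψ : FreeAlgebra ℂ ℕ →ₗ[ℂ] ℂ) (hψ1 : ψ 1 = 1)
    (P : FreeAlgebra ℂ ℕ) (h : ∀ i : ℕ, idTensor ψ (dq i P) = 0) :
    ∃ c : ℂ, P = algebraMap ℂ (FreeAlgebra ℂ ℕ) c := by
  classical
  set B := FreeAlgebra.basisFreeMonoid ℂ ℕ with hB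
  set c := B.repr P with hc
  have hsupp : ∀ w ∈ c.support, FreeMonoid.toList w = [] := by
    by_contra hcon
    push_neg at hcon
    obtain ⟨w0, hw0, hw0ne⟩ := hcon
    obtain ⟨w, hw, hwmax⟩ := Finset.exists_max_image c.support
      (fun w => (FreeMonoid.toList w).length) ⟨w0, hw0⟩
    have hwne : FreeMonoid.toList w ≠ [] := by
      intro h0
      have h1 := hwmax w0 hw0
      rw [h0] at h1
      simp only [List.length_nil, Nat.le_zero, List.length_eq_zero_iff] at h1
      exact hw0ne h1
    have hzero : B.coord (FreeMonoid.ofList ((FreeMonoid.toList w).take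
          ((FreeMonoid.toList w).length - 1)))
        (idTensor ψ (dq ((FreeMonoid.toList w).getD ((FreeMonoid.toList w).length - 1) 0) P))
        = 0 := by
      rw [h _]; simp
    have hexp : B.coord (FreeMonoid.ofList ((FreeMonoid.toList w).take
          ((FreeMonoid.toList w).length - 1)))
        (idTensor ψ (dq ((FreeMonoid.toList w).getD ((FreeMonoid.toList w).length - 1) 0) P))
        = c w := by
      conv_lhs => rw [← B.linearCombination_repr P, Finsupp.linearCombination_apply, Finsupp.sum]
      rw [map_sum, map_sum, map_sum]
      have hterms : ∀ w' ∈ c.support,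
          B.coord (FreeMonoid.ofList ((FreeMonoid.toList w).take
              ((FreeMonoid.toList w).length - 1)))
            (idTensor ψ (dq ((FreeMonoid.toList w).getD ((FreeMonoid.toList w).length - 1) 0)
              (c w' • B w')))
          = c w' * (if w' = w then 1 else 0) := by
        intro w' hw'
        rw [map_smul, map_smul, map_smul, key ψ hψ1 w w' hwne (hwmax w' hw')]
        simp [smul_eq_mul]
      rw [Finset.sum_congr rfl hterms]
      simp [Finset.sum_ite_eq', hw]
    rw [hzero] at hexp
    exact (Finsupp.mem_support_iff.mp hw) hexp.symm
  refine ⟨c 1, ?_⟩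
  have hsub : c.support ⊆ {1} := by
    intro w hw
    rw [Finset.mem_singleton]
    exact FreeMonoid.toList.injective (by rw [hsupp w hw]; rfl)
  conv_lhs => rw [← B.linearCombination_repr P, Finsupp.linearCombination_apply, Finsupp.sum]
  rw [Finset.sum_subset hsub (by
    intro x _ hx
    rw [Finsupp.notMem_support_iff.mp hx, zero_smul])]
  rw [Finset.sum_singleton]
  have hB1 : B 1 = 1 := by
    rw [hB, basis_eq_wordProd]
    rfl
  rw [hB1, Algebra.algebraMap_eq_smul_one]
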